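/- Let q : ℝ → ℝ satisfy (A1) q(0) = q(1) = 0, (A2) q is twice differentiable on [0,1], and (A3) q is strictly concave on [0,1]. Then the function u ↦ q'(u)/(1 + q(u))² is strictly decreasing on [0,1]. -/

import Mathlib

open Set

/-- Composition of a concave strictly monotone function with a strictly concave
function is strictly concave. -/
lemma strictConcaveOn_comp_aux {s t : Set ℝ} (ht : Convex ℝ t) {f g : ℝ → ℝ}
    (hg : ConcaveOn ℝ t g) (hg' : StrictMonoOn g t)
    (hf : StrictConcaveOn ℝ s f) (hmaps : ∀ x ∈ s, f x ∈ t) :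
    StrictConcaveOn ℝ s (fun x => g (f x)) := by
  refine ⟨hf.1, fun x hx y hy hxy a b ha hb hab => ?_⟩
  have h1 : a • f x + b • f y < f (a • x + b • y) := hf.2 hx hy hxy ha hb hab
  have hmem1 : a • f x + b • f y ∈ t := ht (hmaps x hx) (hmaps y hy) ha.le hb.le hab
  have hmem2 : f (a • x + b • y) ∈ t := hmaps _ (hf.1 hx hy ha.le hb.le hab)
  calc a • g (f x) + b • g (f y) ≤ g (a • f x + b • f y) :=
        hg.2 (hmaps x hx) (hmaps y hy) ha.le hb.le hab
    _ < g (f (a • x + b • y)) := hg' hmem1 hmem2 h1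

lemma gfun_concave : ConcaveOn ℝ (Ici (0:ℝ)) (fun t => t / (1 + t)) := by
  refine ⟨convex_Ici 0, fun x hx y hy a b ha hb hab => ?_⟩
  simp only [smul_eq_mul, mem_Ici] at *
  have hx1 : (0:ℝ) < 1 + x := by linarith
  have hy1 : (0:ℝ) < 1 + y := by linarith
  have hz1 : (0:ℝ) < 1 + (a * x + b * y) := by nlinarith
  rw [mul_div_assoc', mul_div_assoc', div_add_div _ _ (ne_of_gt hx1) (ne_of_gt hy1),
    div_le_div_iff₀ (by positivity) hz1]
  have hb' : b = 1 - a := by linarith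
  subst hb'
  nlinarith [mul_nonneg (mul_nonneg ha hb) (sq_nonneg (x - y))]

lemma gfun_mono : StrictMonoOn (fun t => t / (1 + t)) (Ici (0:ℝ)) := by
  intro x hx y hy hxy
  simp only [mem_Ici] at *
  have hx1 : (0:ℝ) < 1 + x := by linarith
  have hy1 : (0:ℝ) < 1 + y := by linarith
  rw [div_lt_div_iff₀ hx1 hy1]
  nlinarith

theorem pi_deriv_strictAntiOn (q : ℝ → ℝ)
    (hq0 : q 0 = 0) (hq1 : q 1 = 0)
    (hq2 : ∀ u ∈ Set.Icc (0:ℝ) 1, DifferentiableAt ℝ q u ∧ DifferentiableAt ℝ (deriv q) u)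
    (hqc : StrictConcaveOn ℝ (Set.Icc (0:ℝ) 1) q) :
    StrictAntiOn (fun u => deriv q u / (1 + q u) ^ 2) (Set.Icc (0:ℝ) 1) := by
  -- q is nonnegative on [0,1]
  have hnonneg : ∀ u ∈ Set.Icc (0:ℝ) 1, 0 ≤ q u := by
    intro u hu
    obtain ⟨hu0, hu1⟩ := hu
    have := hqc.concaveOn.2 (show (0:ℝ) ∈ Set.Icc (0:ℝ) 1 from left_mem_Icc.2 one_pos.le)
      (show (1:ℝ) ∈ Set.Icc (0:ℝ) 1 from right_mem_Icc.2 one_pos.le)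
      (show (0:ℝ) ≤ 1 - u by linarith) hu0 (by ring)
    simp only [smul_eq_mul, hq0, hq1, mul_zero, add_zero, mul_one, zero_add] at this
    linarith [this]
  -- the composed function
  set h : ℝ → ℝ := fun u => q u / (1 + q u) with hh
  have hconc : StrictConcaveOn ℝ (Set.Icc (0:ℝ) 1) h :=
    strictConcaveOn_comp_aux (convex_Ici 0) gfun_concave gfun_mono hqc hnonneg
  have hne : ∀ u ∈ Set.Icc (0:ℝ) 1, (1 + q u) ≠ 0 := fun u hu => by
    have := hnonneg u hu; positivity
  have hdiff : ∀ u ∈ Set.Icc (0:ℝ) 1, DifferentiableAt ℝ h u := by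
    intro u hu
    exact ((hq2 u hu).1.div ((differentiableAt_const 1).add (hq2 u hu).1) (hne u hu))
  have hderiv : ∀ u ∈ Set.Icc (0:ℝ) 1, deriv h u = deriv q u / (1 + q u) ^ 2 := by
    intro u hu
    have hd := (hq2 u hu).1
    rw [hh, deriv_fun_div hd (hd.const_add 1) (hne u hu)]
    rw [deriv_const_add]
    have := hne u hu
    field_simp
    ring
  have hanti : StrictAntiOn (deriv h) (Set.Icc (0:ℝ) 1) :=
    hconc.strictAntiOn_deriv hdiff
  intro x hx y hy hxy
  have := hanti hx hy hxy
  rwa [hderiv x hx, hderiv y hy] at this
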